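/- Fix an integer r ≥ 2. Define f_r(n) = max { q_min(G) : G a K_{r+1}-free graph of order n } and c_r = sup { q_min(G)/v(G) : G a K_{r+1}-free graph }, where v(G) is the order of G. Then the limit lim_{n→∞} f_r(n)/n exists and equals c_r. -/

import Mathlib

open Matrix SimpleGraph Finset

/-- The signless Laplacian matrix `Q(G) = D + A` of a finite simple graph `G`. -/
noncomputable def signlessLaplacian {V : Type} [Fintype V] [DecidableEq V]
    (G : SimpleGraph V) : Matrix V V ℝ :=
  letI := Classical.decRel G.Adj
  Matrix.diagonal (fun v => (G.degree v : ℝ)) + G.adjMatrix ℝ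

theorem signlessLaplacian_isHermitian {V : Type} [Fintype V] [DecidableEq V]
    (G : SimpleGraph V) : (signlessLaplacian G).IsHermitian := by
  letI := Classical.decRel G.Adj
  unfold signlessLaplacian
  refine Matrix.IsHermitian.add (Matrix.isHermitian_diagonal _) ?_
  rw [Matrix.IsHermitian, conjTranspose_eq_transpose_of_trivial]
  exact G.isSymm_adjMatrix

/-- `qmin G` is the smallest eigenvalue of the signless Laplacian of `G`. -/
noncomputable def qmin {V : Type} [Fintype V] [DecidableEq V] (G : SimpleGraph V) : ℝ :=
  ⨅ i, (signlessLaplacian_isHermitian G).eigenvalues i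

variable {V : Type} [Fintype V] [DecidableEq V]

lemma signlessLaplacian_eq (G : SimpleGraph V) [DecidableRel G.Adj] :
    signlessLaplacian G = Matrix.diagonal (fun v => (G.degree v : ℝ)) + G.adjMatrix ℝ := by
  unfold signlessLaplacian
  congr! 1
  · congr!
  · congr!

lemma quadForm (G : SimpleGraph V) [DecidableRel G.Adj] (x : V → ℝ) :
    x ⬝ᵥ (signlessLaplacian G) *ᵥ x =
      (∑ v, (G.degree v : ℝ) * x v ^ 2) +
      ∑ v, ∑ u, (if G.Adj v u then x v * x u else 0) := by
  rw [signlessLaplacian_eq, add_mulVec, dotProduct_add]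
  congr 1
  · simp [dotProduct, mulVec_diagonal, sq]; ring_nf
    refine Finset.sum_congr rfl fun v _ => by ring
  · simp [dotProduct, mulVec, adjMatrix_apply, Finset.mul_sum, mul_ite]

lemma vecMul_eq_mulVec_star (U : Matrix V V ℝ) (x : V → ℝ) :
    x ᵥ* U = (star U) *ᵥ x := by
  funext j
  simp [vecMul, mulVec, dotProduct, Matrix.star_apply, mul_comm]

lemma rayleigh_decomp (A : Matrix V V ℝ) (hA : A.IsHermitian) (x : V → ℝ) :
    x ⬝ᵥ A *ᵥ x = ∑ i, hA.eigenvalues i * ((star (hA.eigenvectorUnitary : Matrix V V ℝ) *ᵥ x) i)^2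
    ∧ ∑ i, x i ^ 2 = ∑ i, ((star (hA.eigenvectorUnitary : Matrix V V ℝ) *ᵥ x) i)^2 := by
  set U : Matrix V V ℝ := (hA.eigenvectorUnitary : Matrix V V ℝ) with hU
  set y := (star U) *ᵥ x with hy
  have hUy : U *ᵥ y = x := by
    rw [hy, mulVec_mulVec, (Matrix.mem_unitaryGroup_iff).mp hA.eigenvectorUnitary.2, one_mulVec]
  constructor
  · conv_lhs => rw [hA.spectral_theorem, Unitary.conjStarAlgAut_apply]
    rw [← mulVec_mulVec, ← mulVec_mulVec, dotProduct_mulVec, vecMul_eq_mulVec_star]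
    have : (diagonal (RCLike.ofReal ∘ hA.eigenvalues) : Matrix V V ℝ) *ᵥ y
        = fun i => hA.eigenvalues i * y i := by
      funext i; simp [mulVec_diagonal]
    rw [this]
    simp [dotProduct]
    ring_nf
    congr 1; funext i; ring
  · have : ∑ i, x i ^2 = x ⬝ᵥ x := by simp [dotProduct, sq]
    rw [this]
    conv_lhs => rw [← hUy]
    rw [dotProduct_mulVec, vecMul_eq_mulVec_star, mulVec_mulVec,
      (Unitary.mem_iff.mp hA.eigenvectorUnitary.2).1, one_mulVec]
    simp [dotProduct, sq]

lemma rayleigh_lower [Nonempty V] (A : Matrix V V ℝ) (hA : A.IsHermitian) (x : V → ℝ) :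
    (⨅ i, hA.eigenvalues i) * ∑ i, x i ^ 2 ≤ x ⬝ᵥ A *ᵥ x := by
  obtain ⟨h1, h2⟩ := rayleigh_decomp A hA x
  rw [h1, h2, Finset.mul_sum]
  refine Finset.sum_le_sum fun i _ => ?_
  exact mul_le_mul_of_nonneg_right (ciInf_le (Finite.bddBelow_range _) i) (sq_nonneg _)

lemma rayleigh_upper [Nonempty V] (A : Matrix V V ℝ) (hA : A.IsHermitian) (c : ℝ)
    (h : ∀ x : V → ℝ, c * ∑ i, x i ^ 2 ≤ x ⬝ᵥ A *ᵥ x) :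
    c ≤ ⨅ i, hA.eigenvalues i := by
  obtain ⟨i₀, hi₀⟩ := Finite.exists_min hA.eigenvalues
  have hqi : (⨅ i, hA.eigenvalues i) = hA.eigenvalues i₀ :=
    le_antisymm (ciInf_le (Finite.bddBelow_range _) i₀) (le_ciInf hi₀)
  set x : V → ℝ := ⇑(hA.eigenvectorBasis i₀) with hx
  have hnorm : ∑ i, x i ^ 2 = 1 := by
    have h1 : ‖hA.eigenvectorBasis i₀‖ = 1 := hA.eigenvectorBasis.orthonormal.1 i₀
    rw [EuclideanSpace.norm_eq] at h1
    have := congrArg (fun t : ℝ => t ^ 2) h1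
    simp only [one_pow] at this
    rw [Real.sq_sqrt (by positivity)] at this
    simpa [Real.norm_eq_abs, sq_abs] using this
  have hAx : A *ᵥ x = hA.eigenvalues i₀ • x := hA.mulVec_eigenvectorBasis i₀
  have := h x
  rw [hnorm, mul_one, hAx] at this
  have h2 : x ⬝ᵥ hA.eigenvalues i₀ • x = hA.eigenvalues i₀ * ∑ i, x i ^ 2 := by
    simp [dotProduct, Finset.mul_sum, sq, mul_comm, mul_left_comm]
  rw [h2, hnorm, mul_one] at this
  rw [hqi]; exact this

lemma qmin_rayleigh_le [Nonempty V] (G : SimpleGraph V) (x : V → ℝ) :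
    qmin G * ∑ i, x i ^ 2 ≤ x ⬝ᵥ (signlessLaplacian G) *ᵥ x :=
  rayleigh_lower _ (signlessLaplacian_isHermitian G) x

lemma le_qmin [Nonempty V] (G : SimpleGraph V) (c : ℝ)
    (h : ∀ x : V → ℝ, c * ∑ i, x i ^ 2 ≤ x ⬝ᵥ (signlessLaplacian G) *ᵥ x) :
    c ≤ qmin G :=
  rayleigh_upper _ (signlessLaplacian_isHermitian G) c h

lemma qmin_le_degree [Nonempty V] (G : SimpleGraph V) [DecidableRel G.Adj] (v : V) :
    qmin G ≤ (G.degree v : ℝ) := by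
  have h := qmin_rayleigh_le G (Pi.single v 1)
  have h1 : ∑ i, (Pi.single v 1 : V → ℝ) i ^ 2 = 1 := by
    rw [Finset.sum_eq_single v] <;> simp +contextual [Pi.single_apply]
  have h2 : (Pi.single v 1 : V → ℝ) ⬝ᵥ (signlessLaplacian G) *ᵥ (Pi.single v 1 : V → ℝ)
      = (G.degree v : ℝ) := by
    rw [mulVec_single, signlessLaplacian_eq]
    simp [single_dotProduct]
  rw [h1, mul_one, h2] at h
  exact h

lemma qmin_le_card [Nonempty V] (G : SimpleGraph V) :
    qmin G ≤ (Fintype.card V : ℝ) := by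
  classical
  inhabit V
  refine (qmin_le_degree G default).trans ?_
  exact_mod_cast (G.degree_lt_card_verts default).le

lemma qmin_nonneg_of (G : SimpleGraph V) (h0 : ∀ x : V → ℝ, 0 ≤ x ⬝ᵥ (signlessLaplacian G) *ᵥ x)
    [Nonempty V] : (0:ℝ) ≤ qmin G :=
  le_qmin G 0 (by simpa using h0)

lemma qmin_bot [Nonempty V] : qmin (⊥ : SimpleGraph V) = 0 := by
  classical
  have hQ : signlessLaplacian (⊥ : SimpleGraph V) = 0 := by
    rw [signlessLaplacian_eq]
    ext i j
    simp [Matrix.diagonal_apply, SimpleGraph.bot_degree]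
  refine le_antisymm ?_ ?_
  · have := qmin_le_degree (⊥ : SimpleGraph V) (Classical.arbitrary V)
    simpa [SimpleGraph.bot_degree] using this
  · exact le_qmin _ 0 (by simp [hQ])

def pmap {n m : ℕ} (hm : 0 < m) : Fin n → Fin m := fun a => ⟨a.val % m, Nat.mod_lt _ hm⟩

lemma fiber_card_le {n m : ℕ} (hm : 0 < m) (u : Fin m) :
    (univ.filter fun a : Fin n => pmap (n := n) hm a = u).card ≤ n / m + 1 := by
  have : (univ.filter fun a : Fin n => pmap (n := n) hm a = u).card ≤ (Finset.range (n / m + 1)).card := by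
    refine Finset.card_le_card_of_injOn (fun a => (a : ℕ) / m) ?_ ?_
    · intro a ha
      rw [Finset.mem_coe, Finset.mem_range, Nat.lt_succ_iff]
      exact Nat.div_le_div_right a.2.le
    · intro a ha b hb hab
      simp only [Finset.mem_coe, Finset.mem_filter] at ha hb
      have ha' : (a : ℕ) % m = u := congrArg Fin.val ha.2
      have hb' : (b : ℕ) % m = u := congrArg Fin.val hb.2
      have hdiv : (a : ℕ) / m = (b : ℕ) / m := hab
      refine Fin.ext ?_
      rw [← Nat.div_add_mod (a : ℕ) m, ← Nat.div_add_mod (b : ℕ) m, ha', hb', hdiv]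
  simpa using this

lemma le_fiber_card {n m : ℕ} (hm : 0 < m) (u : Fin m) :
    n / m ≤ (univ.filter fun a : Fin n => pmap (n := n) hm a = u).card := by
  have hmap : ∀ k : Fin (n / m), (u : ℕ) + (k : ℕ) * m < n := by
    intro k
    have h1 : (u : ℕ) + (k : ℕ) * m < ((k : ℕ) + 1) * m := by
      have := u.2; nlinarith [u.2]
    have h2 : ((k : ℕ) + 1) * m ≤ (n / m) * m :=
      Nat.mul_le_mul_right m (Nat.succ_le_of_lt k.2)
    exact lt_of_lt_of_le h1 (h2.trans (Nat.div_mul_le_self n m))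
  have : (univ : Finset (Fin (n / m))).card ≤
      (univ.filter fun a : Fin n => pmap (n := n) hm a = u).card := by
    refine Finset.card_le_card_of_injOn (fun k => ⟨(u : ℕ) + (k : ℕ) * m, hmap k⟩) ?_ ?_
    · intro k _
      rw [Finset.mem_coe, Finset.mem_filter]
      refine ⟨Finset.mem_univ _, ?_⟩
      apply Fin.ext
      show ((u : ℕ) + (k : ℕ) * m) % m = (u : ℕ)
      rw [Nat.add_mul_mod_self_right, Nat.mod_eq_of_lt u.2]
    · intro k₁ _ k₂ _ h
      have := congrArg Fin.val h
      simp only at this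
      apply Fin.ext
      have hm' := hm
      nlinarith [Nat.lt_or_ge (k₁ : ℕ) (k₂ : ℕ)]
  simpa using this

lemma fiber_sum {n m : ℕ} (hm : 0 < m) (w : Fin n → ℝ) (f : Fin m → ℝ) :
    ∑ a, w a * f (pmap (n := n) hm a) =
      ∑ u, (∑ a ∈ univ.filter (fun a : Fin n => pmap (n := n) hm a = u), w a) * f u := by
  rw [← Finset.sum_fiberwise univ (pmap (n := n) hm) (fun a => w a * f (pmap (n := n) hm a))]
  refine Finset.sum_congr rfl fun u _ => ?_
  rw [Finset.sum_mul]
  refine Finset.sum_congr rfl fun a ha => ?_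
  rw [(Finset.mem_filter.mp ha).2]

lemma qmin_blowup {m n : ℕ} (hm : 0 < m) (hmn : m ≤ n) (G : SimpleGraph (Fin m))
    (hq : 0 < qmin G) :
    (↑(n / m) : ℝ) * qmin G - m ≤ qmin (G.comap (pmap (n := n) hm)) := by
  haveI : Nonempty (Fin m) := ⟨⟨0, hm⟩⟩
  haveI : Nonempty (Fin n) := ⟨⟨0, lt_of_lt_of_le hm hmn⟩⟩
  classical
  set q : ℝ := qmin G with hqdef
  set t : ℕ := n / m with ht
  have ht1 : 1 ≤ t := (Nat.one_le_div_iff hm).mpr hmn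
  set H := G.comap (pmap (n := n) hm) with hH
  apply le_qmin
  intro x
  set fib : Fin m → Finset (Fin n) := fun u => univ.filter (fun a => pmap (n := n) hm a = u) with hfib
  set s : Fin m → ℝ := fun u => ∑ a ∈ fib u, x a with hs
  set P : Fin m → ℝ := fun u => ∑ a ∈ fib u, x a ^ 2 with hPdef
  have hPsum : ∑ u, P u = ∑ a, x a ^ 2 := Finset.sum_fiberwise _ _ _
  have hPnn : ∀ u, 0 ≤ P u := fun u => Finset.sum_nonneg fun a _ => sq_nonneg _
  have hCS : ∀ u, s u ^ 2 ≤ ((t : ℝ) + 1) * P u := by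
    intro u
    have h1 : s u ^ 2 ≤ ((fib u).card : ℝ) * P u := by
      simpa [hs, hPdef] using sq_sum_le_card_mul_sum_sq (s := fib u) (f := x)
    refine h1.trans (mul_le_mul_of_nonneg_right ?_ (hPnn u))
    have := fiber_card_le (n := n) hm u
    exact_mod_cast this
  have hdegG : ∀ u, q ≤ (G.degree u : ℝ) := fun u => qmin_le_degree G u
  have hdegGm : ∀ u : Fin m, (G.degree u : ℝ) ≤ m := by
    intro u
    have := G.degree_lt_card_verts u
    rw [Fintype.card_fin] at this
    exact_mod_cast this.le
  rw [quadForm H x]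
  -- degree of H lower bound
  have hdegH : ∀ a : Fin n, (t : ℝ) * (G.degree (pmap (n := n) hm a) : ℝ) ≤ (H.degree a : ℝ) := by
    intro a
    have hcardH : (H.degree a : ℝ) = ∑ b, (1 : ℝ) *
        (if G.Adj (pmap (n := n) hm a) (pmap (n := n) hm b) then 1 else 0) := by
      rw [SimpleGraph.degree, neighborFinset_eq_filter, Finset.card_filter]
      push_cast
      refine Finset.sum_congr rfl fun b _ => ?_
      rw [one_mul]
      congr 1
    rw [hcardH, fiber_sum hm (fun _ => (1:ℝ)) (fun v => if G.Adj (pmap (n := n) hm a) v then 1 else 0)]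
    have hdeg2 : (G.degree (pmap (n := n) hm a) : ℝ)
        = ∑ v, (if G.Adj (pmap (n := n) hm a) v then (1:ℝ) else 0) := by
      rw [SimpleGraph.degree, neighborFinset_eq_filter, Finset.card_filter]
      push_cast
      rfl
    rw [hdeg2, Finset.mul_sum]
    refine Finset.sum_le_sum fun v _ => ?_
    have hfc : (t : ℝ) ≤ ((fib v).card : ℝ) := by exact_mod_cast le_fiber_card (n := n) hm v
    have hone : ∑ a ∈ fib v, (1:ℝ) = ((fib v).card : ℝ) := by simp
    rw [hone]
    split
    · simpa using hfc
    · simp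
  -- cross term identity
  have inner1 : ∀ u : Fin m, ∑ b, (if G.Adj u (pmap (n := n) hm b) then x b else 0)
      = ∑ v, (if G.Adj u v then s v else 0) := by
    intro u
    have h := fiber_sum hm x (fun v => if G.Adj u v then (1:ℝ) else 0)
    calc ∑ b, (if G.Adj u (pmap (n := n) hm b) then x b else 0)
        = ∑ b, x b * (if G.Adj u (pmap (n := n) hm b) then (1:ℝ) else 0) := by
          refine Finset.sum_congr rfl fun b _ => ?_; split <;> simp
      _ = ∑ v, s v * (if G.Adj u v then (1:ℝ) else 0) := h
      _ = ∑ v, (if G.Adj u v then s v else 0) := by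
          refine Finset.sum_congr rfl fun v _ => ?_; split <;> simp
  have hcross : ∑ a, ∑ b, (if H.Adj a b then x a * x b else 0)
      = ∑ u, ∑ v, (if G.Adj u v then s u * s v else 0) := by
    calc ∑ a, ∑ b, (if H.Adj a b then x a * x b else 0)
        = ∑ a, x a * (∑ v, if G.Adj (pmap (n := n) hm a) v then s v else 0) := by
          refine Finset.sum_congr rfl fun a _ => ?_
          rw [← inner1 (pmap (n := n) hm a), Finset.mul_sum]
          refine Finset.sum_congr rfl fun b _ => ?_
          have hadj : H.Adj a b ↔ G.Adj (pmap (n := n) hm a) (pmap (n := n) hm b) := Iff.rfl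
          by_cases hab : G.Adj (pmap (n := n) hm a) (pmap (n := n) hm b)
          · rw [if_pos hab, if_pos (hadj.mpr hab)]
          · rw [if_neg hab, if_neg (fun hc => hab (hadj.mp hc)), mul_zero]
      _ = ∑ u, s u * (∑ v, if G.Adj u v then s v else 0) :=
          fiber_sum hm x (fun u => ∑ v, if G.Adj u v then s v else 0)
      _ = ∑ u, ∑ v, (if G.Adj u v then s u * s v else 0) := by
          refine Finset.sum_congr rfl fun u _ => ?_
          rw [Finset.mul_sum]
          refine Finset.sum_congr rfl fun v _ => ?_
          split <;> simp
  rw [hcross]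
  -- Rayleigh for s on G
  have hray := qmin_rayleigh_le G s
  rw [quadForm G s] at hray
  -- first term bound
  have hterm1 : ∑ u, (t : ℝ) * (G.degree u : ℝ) * P u ≤ ∑ a, (H.degree a : ℝ) * x a ^ 2 := by
    have hfs := fiber_sum hm (fun a => x a ^ 2) (fun u => (t : ℝ) * (G.degree u : ℝ))
    have : ∑ u, (t : ℝ) * (G.degree u : ℝ) * P u
        = ∑ a, x a ^ 2 * ((t : ℝ) * (G.degree (pmap (n := n) hm a) : ℝ)) := by
      rw [hfs]
      refine Finset.sum_congr rfl fun u _ => ?_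
      ring
    rw [this]
    refine Finset.sum_le_sum fun a _ => ?_
    have := mul_le_mul_of_nonneg_right (hdegH a) (sq_nonneg (x a))
    nlinarith [this]
  -- per-vertex inequality and assembly
  have hmain : ∀ u : Fin m, ((t : ℝ) * q - m) * P u
      ≤ (t : ℝ) * (G.degree u : ℝ) * P u + q * s u ^ 2 - (G.degree u : ℝ) * s u ^ 2 := by
    intro u
    have h1 := hCS u
    have h2 := hdegG u
    have h3 := hdegGm u
    have h4 := hPnn u
    have htr : (1 : ℝ) ≤ (t : ℝ) := by exact_mod_cast ht1
    nlinarith [mul_nonneg (sub_nonneg.mpr h2) (by linarith : (0:ℝ) ≤ ((t:ℝ)+1) * P u - s u ^ 2),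
      sq_nonneg (s u), mul_nonneg h4 (sub_nonneg.mpr h3)]
  calc ((t : ℝ) * q - m) * ∑ i, x i ^ 2
      = ∑ u, ((t : ℝ) * q - m) * P u := by rw [← hPsum, Finset.mul_sum]
    _ ≤ ∑ u, ((t : ℝ) * (G.degree u : ℝ) * P u + q * s u ^ 2 - (G.degree u : ℝ) * s u ^ 2) :=
        Finset.sum_le_sum fun u _ => hmain u
    _ = ∑ u, (t : ℝ) * (G.degree u : ℝ) * P u
        + (q * ∑ u, s u ^ 2 - ∑ u, (G.degree u : ℝ) * s u ^ 2) := by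
        rw [Finset.sum_sub_distrib, Finset.sum_add_distrib, Finset.mul_sum]
        ring
    _ ≤ ∑ u, (t : ℝ) * (G.degree u : ℝ) * P u
        + ∑ u, ∑ v, (if G.Adj u v then s u * s v else 0) := by
        have : q * ∑ u, s u ^ 2 - ∑ u, (G.degree u : ℝ) * s u ^ 2
            ≤ ∑ u, ∑ v, (if G.Adj u v then s u * s v else 0) := by linarith [hray]
        linarith
    _ ≤ ∑ a, (H.degree a : ℝ) * x a ^ 2
        + ∑ u, ∑ v, (if G.Adj u v then s u * s v else 0) := by linarith [hterm1]

/-- `c r` is the supremum of `qmin(G)/v(G)` over all (nonempty) `K_{r+1}`-free graphs `G`. -/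
noncomputable def cSup (r : ℕ) : ℝ :=
  sSup {x : ℝ | ∃ (m : ℕ) (G : SimpleGraph (Fin m)),
    0 < m ∧ G.CliqueFree (r + 1) ∧ x = qmin G / m}

/-- `maxQmin r n` is `f_r(n)`, the maximum of `qmin G` over `K_{r+1}`-free graphs of order `n`. -/
noncomputable def maxQmin (r n : ℕ) : ℝ :=
  sSup {x : ℝ | ∃ G : SimpleGraph (Fin n), G.CliqueFree (r + 1) ∧ x = qmin G}

/-- For every `r ≥ 2`, the limit of `f_r(n)/n` as `n → ∞` exists and
equals `c_r`. -/
theorem tendsto_maxQmin_div (r : ℕ) (hr : 2 ≤ r) :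
    Filter.Tendsto (fun n : ℕ => maxQmin r n / n) Filter.atTop (nhds (cSup r)) := by
  have hr2 : 2 ≤ r + 1 := by omega
  set cset : Set ℝ := {x : ℝ | ∃ (m : ℕ) (G : SimpleGraph (Fin m)),
    0 < m ∧ G.CliqueFree (r + 1) ∧ x = qmin G / m} with hcset
  set mset : ℕ → Set ℝ := fun n =>
    {x : ℝ | ∃ G : SimpleGraph (Fin n), G.CliqueFree (r + 1) ∧ x = qmin G} with hmset
  have hcSup_eq : cSup r = sSup cset := rfl
  have hmax_eq : ∀ n, maxQmin r n = sSup (mset n) := fun n => rfl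
  have hc0 : (0:ℝ) ∈ cset := by
    refine ⟨1, ⊥, one_pos, SimpleGraph.cliqueFree_bot hr2, ?_⟩
    haveI : Nonempty (Fin 1) := ⟨0⟩
    rw [qmin_bot]; norm_num
  have hbdd : BddAbove cset := by
    refine ⟨1, fun x hx => ?_⟩
    obtain ⟨m, G, hm, -, rfl⟩ := hx
    haveI : Nonempty (Fin m) := ⟨⟨0, hm⟩⟩
    have h1 : qmin G ≤ (m:ℝ) := by simpa using qmin_le_card G
    rw [div_le_one (by exact_mod_cast hm)]
    exact h1
  have hmne : ∀ n, (mset n).Nonempty :=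
    fun n => ⟨qmin (⊥ : SimpleGraph (Fin n)), ⊥, SimpleGraph.cliqueFree_bot hr2, rfl⟩
  have hmbdd : ∀ n, 0 < n → BddAbove (mset n) := by
    intro n hn
    refine ⟨n, fun x hx => ?_⟩
    obtain ⟨G, -, rfl⟩ := hx
    haveI : Nonempty (Fin n) := ⟨⟨0, hn⟩⟩
    simpa using qmin_le_card G
  -- upper bound
  have hupper : ∀ n : ℕ, 0 < n → maxQmin r n / n ≤ cSup r := by
    intro n hn
    have hn0 : (0:ℝ) < n := by exact_mod_cast hn
    rw [div_le_iff₀ hn0, hmax_eq]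
    refine csSup_le (hmne n) fun x hx => ?_
    obtain ⟨G, hG, rfl⟩ := hx
    have hmem : qmin G / n ∈ cset := ⟨n, G, hn, hG, rfl⟩
    have := le_csSup hbdd hmem
    rw [div_le_iff₀ hn0] at this
    rw [← hcSup_eq] at this
    exact this
  -- lower bound
  have hlower : ∀ ε : ℝ, 0 < ε → ∃ N : ℕ, ∀ n ≥ N, cSup r - ε ≤ maxQmin r n / n := by
    intro ε hε
    obtain ⟨x₀, hx₀mem, hx₀⟩ := exists_lt_of_lt_csSup ⟨0, hc0⟩
      (show cSup r - ε/2 < sSup cset by rw [← hcSup_eq]; linarith)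
    obtain ⟨m, G, hm, hGfree, rfl⟩ := hx₀mem
    haveI : Nonempty (Fin m) := ⟨⟨0, hm⟩⟩
    have hm0 : (0:ℝ) < m := by exact_mod_cast hm
    by_cases hq : 0 < qmin G
    · set q : ℝ := qmin G with hqdef
      refine ⟨max m (Nat.ceil ((q + m) / (ε/2))), fun n hn => ?_⟩
      have hmn : m ≤ n := le_trans (le_max_left _ _) hn
      have hn0 : (0:ℝ) < n := lt_of_lt_of_le hm0 (by exact_mod_cast hmn)
      have hceil : (q + m) / (ε/2) ≤ (n:ℝ) := by
        refine le_trans (Nat.le_ceil _) ?_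
        exact_mod_cast le_trans (le_max_right _ _) hn
      have hc : q + m ≤ ε/2 * n := by
        rw [div_le_iff₀ (by linarith : (0:ℝ) < ε/2)] at hceil
        linarith
      set t : ℕ := n / m with htdef
      -- cliquefree of blowup
      have hfree : (G.comap (pmap (n := n) hm)).CliqueFree (r+1) := by
        intro S hS
        have hinj : Set.InjOn (pmap (n := n) hm) S := by
          intro a ha b hb hab
          by_contra hne
          have hadj := hS.1 ha hb hne
          have : G.Adj (pmap (n := n) hm a) (pmap (n := n) hm b) := hadj
          rw [hab] at this
          exact G.irrefl this
        refine hGfree (S.image (pmap (n := n) hm)) ⟨?_, ?_⟩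
        · intro u hu v hv huv
          obtain ⟨a, ha, rfl⟩ := Finset.mem_image.mp hu
          obtain ⟨b, hb, rfl⟩ := Finset.mem_image.mp hv
          exact hS.1 ha hb (fun h => huv (by rw [h]))
        · rw [Finset.card_image_of_injOn hinj, hS.2]
      have hblow := qmin_blowup hm hmn G hq
      have hmemH : qmin (G.comap (pmap (n := n) hm)) ∈ mset n := ⟨_, hfree, rfl⟩
      have h2 : (t:ℝ) * q - m ≤ maxQmin r n := by
        rw [hmax_eq]
        exact hblow.trans (le_csSup (hmbdd n (by omega)) hmemH)
      have h3 : ((t:ℝ) * q - m) / n ≤ maxQmin r n / n := by gcongr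
      have hnm : (n:ℝ) < ((t:ℝ)+1) * m := by
        have hdm := Nat.div_add_mod n m
        have hmod := Nat.mod_lt n hm
        have h1 : ((m * (n / m) + n % m : ℕ) : ℝ) = (n:ℝ) := by exact_mod_cast hdm
        push_cast at h1
        have h2 : ((n % m : ℕ) : ℝ) < (m:ℝ) := by exact_mod_cast hmod
        rw [← htdef] at h1
        nlinarith
      have hcs : cSup r ≤ q/m + ε/2 := by
        rw [hcSup_eq]; linarith [hx₀]
      have hqn : q/m*n ≤ q*((t:ℝ)+1) := by
        rw [div_mul_eq_mul_div, div_le_iff₀ hm0]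
        nlinarith [hq.le, hnm]
      have harith : cSup r - ε ≤ ((t:ℝ) * q - m) / n := by
        rw [le_div_iff₀ hn0]
        have hA : (cSup r) * n ≤ (q/m + ε/2)*n := mul_le_mul_of_nonneg_right hcs hn0.le
        nlinarith [hA, hqn, hc]
      linarith
    · push_neg at hq
      have hx0 : qmin G / m ≤ 0 := div_nonpos_of_nonpos_of_nonneg hq hm0.le
      have hcs : sSup cset - ε/2 < 0 := lt_of_lt_of_le hx₀ hx0
      refine ⟨1, fun n hn => ?_⟩
      have hn0 : (0:ℝ) < n := by exact_mod_cast hn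
      haveI : Nonempty (Fin n) := ⟨⟨0, by omega⟩⟩
      have h0mem : (0:ℝ) ∈ mset n := ⟨⊥, SimpleGraph.cliqueFree_bot hr2, qmin_bot.symm⟩
      have h1 : 0 ≤ maxQmin r n := by
        rw [hmax_eq]; exact le_csSup (hmbdd n (by omega)) h0mem
      have h2 : 0 ≤ maxQmin r n / n := div_nonneg h1 hn0.le
      rw [hcSup_eq]
      linarith
  -- assemble
  rw [Metric.tendsto_atTop]
  intro ε hε
  obtain ⟨N, hN⟩ := hlower (ε/2) (by linarith)
  refine ⟨max N 1, fun n hn => ?_⟩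
  have hn1 : 1 ≤ n := le_trans (le_max_right _ _) hn
  have hup := hupper n (by omega)
  have hlo := hN n (le_trans (le_max_left _ _) hn)
  rw [Real.dist_eq, abs_lt]
  constructor <;> linarith
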